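/- Let f : ℂ → ℂ be continuous on the closed strip S = { z ∈ ℂ : −1 ≤ Im z ≤ 0 }, holomorphic (complex differentiable) on the open strip { z : −1 < Im z < 0 }, and bounded on S (there exists C with |f(z)| ≤ C for all z ∈ S). If f(u) = f(u − i) for every u ∈ ℝ, then f is constant on S. -/

import Mathlib

open Complex intervalIntegral Set

private lemma abs_sub_le_of_mem_uIoc {a b x : ℝ} (h : x ∈ Set.uIoc a b) :
    |x - a| ≤ |b - a| := by
  obtain ⟨h1, h2⟩ := h
  rcases le_total a b with hab | hab
  · rw [min_eq_left hab] at h1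
    rw [max_eq_right hab] at h2
    rw [_root_.abs_of_nonneg (sub_nonneg.2 hab), abs_le]
    constructor <;> linarith
  · rw [min_eq_right hab] at h1
    rw [max_eq_left hab] at h2
    rw [_root_.abs_of_nonpos (sub_nonpos.2 hab), abs_le]
    constructor <;> linarith

/-- If `g` is continuous on `ℂ` and complex differentiable at every point of the strip
`b - 1 < im < b + 1` off the line `im = b`, then it is also differentiable on that line. -/
private lemma strip_diffAt_of_diff_off_line {g : ℂ → ℂ} (hg : Continuous g) {b : ℝ}
    (hd : ∀ w : ℂ, b - 1 < w.im → w.im < b + 1 → w.im ≠ b → DifferentiableAt ℂ g w)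
    {z : ℂ} (hz : z.im = b) : DifferentiableAt ℂ g z := by
  have hih : ∀ (c a₁ a₂ : ℝ), IntervalIntegrable (fun x : ℝ => g (x + c * I))
      MeasureTheory.volume a₁ a₂ := fun c a₁ a₂ =>
    (hg.comp (by continuity)).intervalIntegrable _ _
  have hiv : ∀ (c y₁ y₂ : ℝ), IntervalIntegrable (fun y : ℝ => g (c + y * I))
      MeasureTheory.volume y₁ y₂ := fun c y₁ y₂ =>
    (hg.comp (by continuity)).intervalIntegrable _ _
  -- Cauchy–Goursat for rectangles whose open interior avoids the line `im = b`
  have hrect0 : ∀ p q : ℂ, b - 1 < p.im → p.im < b + 1 → b - 1 < q.im → q.im < b + 1 →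
      b ∉ Ioo (min p.im q.im) (max p.im q.im) →
      (∫ x : ℝ in p.re..q.re, g (x + p.im * I)) - (∫ x : ℝ in p.re..q.re, g (x + q.im * I)) +
        I • (∫ y : ℝ in p.im..q.im, g (q.re + y * I)) -
        I • (∫ y : ℝ in p.im..q.im, g (p.re + y * I)) = 0 := by
    intro p q hp1 hp2 hq1 hq2 hb
    refine integral_boundary_rect_eq_zero_of_differentiable_on_off_countable g p q ∅
      countable_empty hg.continuousOn ?_
    rintro x ⟨hx, -⟩
    rw [Complex.mem_reProdIm] at hx
    obtain ⟨-, hx2⟩ := hx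
    have h1 : b - 1 < x.im := lt_of_lt_of_le (lt_min hp1 hq1) (le_of_lt hx2.1)
    have h2 : x.im < b + 1 := lt_of_le_of_lt (le_of_lt hx2.2) (max_lt hp2 hq2)
    have h3 : x.im ≠ b := fun h => hb (h ▸ hx2)
    exact hd x h1 h2 h3
  -- the local primitive
  set F : ℂ → ℂ := fun w => (∫ x : ℝ in (0:ℝ)..w.re, g (x + b * I)) +
      I * ∫ y : ℝ in b..w.im, g (w.re + y * I) with hFdef
  have key : ∀ p q : ℂ, b - 1 < p.im → p.im < b + 1 → b - 1 < q.im → q.im < b + 1 →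
      F q - F p = (∫ x : ℝ in p.re..q.re, g (x + p.im * I)) +
        I * ∫ y : ℝ in p.im..q.im, g (q.re + y * I) := by
    intro p q hp1 hp2 hq1 hq2
    have hre : (∫ x : ℝ in (0:ℝ)..q.re, g (x + b * I)) - (∫ x : ℝ in (0:ℝ)..p.re, g (x + b * I))
        = ∫ x : ℝ in p.re..q.re, g (x + b * I) :=
      integral_interval_sub_left (hih b 0 q.re) (hih b 0 p.re)
    have hb : b ∉ Ioo (min p.im ((⟨q.re, b⟩ : ℂ).im)) (max p.im ((⟨q.re, b⟩ : ℂ).im)) := by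
      show b ∉ Ioo (min p.im b) (max p.im b)
      rintro ⟨h1, h2⟩
      rcases le_total p.im b with h | h
      · exact absurd h2 (not_lt.2 (max_le h le_rfl))
      · exact absurd h1 (not_lt.2 (le_min h le_rfl))
    have e : (∫ x : ℝ in p.re..q.re, g (x + p.im * I)) -
          (∫ x : ℝ in p.re..q.re, g (x + b * I)) +
          I • (∫ y : ℝ in p.im..b, g (q.re + y * I)) -
          I • (∫ y : ℝ in p.im..b, g (p.re + y * I)) = 0 :=
      hrect0 p ⟨q.re, b⟩ hp1 hp2 (by simp) (by simp) hb
    have a₁ : (∫ y : ℝ in p.im..b, g (q.re + y * I)) + (∫ y : ℝ in b..q.im, g (q.re + y * I))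
        = ∫ y : ℝ in p.im..q.im, g (q.re + y * I) :=
      integral_add_adjacent_intervals (hiv _ _ _) (hiv _ _ _)
    have a₂ : (∫ y : ℝ in p.im..b, g (p.re + y * I)) + (∫ y : ℝ in b..p.im, g (p.re + y * I))
        = 0 := by
      rw [integral_add_adjacent_intervals (hiv _ _ _) (hiv _ _ _), integral_same]
    simp only [smul_eq_mul] at e
    simp only [hFdef]
    linear_combination hre - e + I * a₁ - I * a₂
  -- F is a primitive of g on the strip
  have hF : ∀ p : ℂ, b - 1 < p.im → p.im < b + 1 → HasDerivAt F (g p) p := by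
    intro p hp1 hp2
    rw [hasDerivAt_iff_isLittleO, Asymptotics.isLittleO_iff]
    intro c hc
    obtain ⟨δ, hδ0, hδ⟩ := Metric.continuousAt_iff.1 hg.continuousAt (c / 2) (by positivity)
    have hε1 : (0:ℝ) < p.im - (b - 1) := by linarith
    have hε2 : (0:ℝ) < b + 1 - p.im := by linarith
    set ε : ℝ := min (δ / 2) (min (p.im - (b - 1)) (b + 1 - p.im)) with hε
    have hε0 : 0 < ε := lt_min (by positivity) (lt_min hε1 hε2)
    filter_upwards [Metric.ball_mem_nhds p hε0] with q hq
    rw [Metric.mem_ball, Complex.dist_eq] at hq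
    have him : |q.im - p.im| ≤ ‖q - p‖ := by
      simpa [Complex.sub_im] using Complex.abs_im_le_norm (q - p)
    have hre : |q.re - p.re| ≤ ‖q - p‖ := by
      simpa [Complex.sub_re] using Complex.abs_re_le_norm (q - p)
    have hq1 : b - 1 < q.im := by
      have h := abs_lt.1 (lt_of_le_of_lt him
        (lt_of_lt_of_le hq (le_trans (min_le_right _ _) (min_le_left _ _))))
      linarith [h.1]
    have hq2 : q.im < b + 1 := by
      have h := abs_lt.1 (lt_of_le_of_lt him
        (lt_of_lt_of_le hq (le_trans (min_le_right _ _) (min_le_right _ _))))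
      linarith [h.2]
    have hqδ : ‖q - p‖ < δ / 2 := lt_of_lt_of_le hq (min_le_left _ _)
    rw [key p q hp1 hp2 hq1 hq2]
    have hsplit : q - p = ((q.re - p.re : ℝ) : ℂ) + ((q.im - p.im : ℝ) : ℂ) * I := by
      rw [← Complex.re_add_im (q - p)]; simp
    have e1 : (∫ x : ℝ in p.re..q.re, (g (x + p.im * I) - g p))
        = (∫ x : ℝ in p.re..q.re, g (x + p.im * I)) - ((q.re - p.re : ℝ) : ℂ) * g p := by
      rw [intervalIntegral.integral_sub (hih _ _ _) intervalIntegrable_const,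
        intervalIntegral.integral_const, Complex.real_smul]
    have e2 : (∫ y : ℝ in p.im..q.im, (g (q.re + y * I) - g p))
        = (∫ y : ℝ in p.im..q.im, g (q.re + y * I)) - ((q.im - p.im : ℝ) : ℂ) * g p := by
      rw [intervalIntegral.integral_sub (hiv _ _ _) intervalIntegrable_const,
        intervalIntegral.integral_const, Complex.real_smul]
    have hEq : (∫ x : ℝ in p.re..q.re, g (x + p.im * I)) +
        (I * ∫ y : ℝ in p.im..q.im, g (q.re + y * I)) - (q - p) • g p
        = (∫ x : ℝ in p.re..q.re, (g (x + p.im * I) - g p)) +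
          I * ∫ y : ℝ in p.im..q.im, (g (q.re + y * I) - g p) := by
      rw [e1, e2, smul_eq_mul, hsplit]; ring
    rw [hEq]
    have b1 : ‖∫ x : ℝ in p.re..q.re, (g (x + p.im * I) - g p)‖ ≤ (c / 2) * |q.re - p.re| := by
      apply intervalIntegral.norm_integral_le_of_norm_le_const
      intro x hx
      have hxle : |x - p.re| ≤ |q.re - p.re| := abs_sub_le_of_mem_uIoc hx
      have hdist : dist (↑x + ↑p.im * I) p < δ := by
        rw [Complex.dist_eq]
        have harg : (↑x + ↑p.im * I - p) = ((x - p.re : ℝ) : ℂ) := by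
          apply Complex.ext <;> simp
        rw [harg, Complex.norm_real, Real.norm_eq_abs]
        calc |x - p.re| ≤ |q.re - p.re| := hxle
          _ ≤ ‖q - p‖ := hre
          _ < δ / 2 := hqδ
          _ < δ := by linarith
      have h := hδ hdist
      rw [Complex.dist_eq] at h
      exact le_of_lt h
    have b2 : ‖∫ y : ℝ in p.im..q.im, (g (q.re + y * I) - g p)‖ ≤ (c / 2) * |q.im - p.im| := by
      apply intervalIntegral.norm_integral_le_of_norm_le_const
      intro y hy
      have hyle : |y - p.im| ≤ |q.im - p.im| := abs_sub_le_of_mem_uIoc hy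
      have hdist : dist (↑q.re + ↑y * I) p < δ := by
        rw [Complex.dist_eq]
        have h1 : (↑q.re + ↑y * I - p).re = q.re - p.re := by simp
        have h2 : (↑q.re + ↑y * I - p).im = y - p.im := by simp
        calc ‖↑q.re + ↑y * I - p‖
            ≤ |(↑q.re + ↑y * I - p).re| + |(↑q.re + ↑y * I - p).im| :=
              Complex.norm_le_abs_re_add_abs_im _
          _ = |q.re - p.re| + |y - p.im| := by rw [h1, h2]
          _ ≤ ‖q - p‖ + ‖q - p‖ :=
              add_le_add hre (le_trans hyle him)
          _ < δ / 2 + δ / 2 := by gcongr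
          _ = δ := by ring
      have h := hδ hdist
      rw [Complex.dist_eq] at h
      exact le_of_lt h
    calc ‖(∫ x : ℝ in p.re..q.re, (g (x + p.im * I) - g p)) +
          I * ∫ y : ℝ in p.im..q.im, (g (q.re + y * I) - g p)‖
        ≤ ‖∫ x : ℝ in p.re..q.re, (g (x + p.im * I) - g p)‖ +
          ‖I * ∫ y : ℝ in p.im..q.im, (g (q.re + y * I) - g p)‖ := norm_add_le _ _
      _ = ‖∫ x : ℝ in p.re..q.re, (g (x + p.im * I) - g p)‖ +
          ‖∫ y : ℝ in p.im..q.im, (g (q.re + y * I) - g p)‖ := by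
            rw [norm_mul, Complex.norm_I, one_mul]
      _ ≤ (c / 2) * |q.re - p.re| + (c / 2) * |q.im - p.im| := add_le_add b1 b2
      _ ≤ (c / 2) * ‖q - p‖ + (c / 2) * ‖q - p‖ := by
            have hn : ‖q - p‖ = ‖q - p‖ := rfl
            have hc2 : (0:ℝ) ≤ c / 2 := le_of_lt (by positivity)
            rw [hn]
            exact add_le_add (mul_le_mul_of_nonneg_left hre hc2)
              (mul_le_mul_of_nonneg_left him hc2)
      _ = c * ‖q - p‖ := by ring
  -- conclude by analyticity of F
  set S : Set ℂ := Complex.im ⁻¹' Ioo (b - 1) (b + 1) with hSdef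
  have hSopen : IsOpen S := isOpen_Ioo.preimage Complex.continuous_im
  have hzS : z ∈ S := by
    simp only [hSdef, Set.mem_preimage, Set.mem_Ioo, hz]
    constructor <;> linarith
  have hFd : DifferentiableOn ℂ F S := fun w hw =>
    (hF w hw.1 hw.2).differentiableAt.differentiableWithinAt
  have hFa : AnalyticOnNhd ℂ F S := (Complex.analyticOnNhd_iff_differentiableOn hSopen).2 hFd
  have hda : AnalyticAt ℂ (deriv F) z := hFa.deriv z hzS
  have hEq : deriv F =ᶠ[nhds z] g := by
    filter_upwards [hSopen.mem_nhds hzS] with w hw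
    exact (hF w hw.1 hw.2).deriv
  exact hEq.differentiableAt_iff.1 hda.differentiableAt

/-- A bounded continuous function on the closed strip `-1 ≤ Im z ≤ 0`, holomorphic on the
open strip, whose two boundary values agree (`f u = f (u - i)` for real `u`), is constant
on the closed strip (Liouville-type theorem used in the paper's Lemma 1). -/
theorem bounded_periodic_strip_function_constant
    (f : ℂ → ℂ)
    (hcont : ContinuousOn f {z : ℂ | -1 ≤ z.im ∧ z.im ≤ 0})
    (hdiff : ∀ z : ℂ, -1 < z.im → z.im < 0 → DifferentiableAt ℂ f z)
    (hbdd : ∃ C : ℝ, ∀ z : ℂ, -1 ≤ z.im → z.im ≤ 0 → ‖f z‖ ≤ C)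
    (hper : ∀ u : ℝ, f (u : ℂ) = f ((u : ℂ) - Complex.I)) :
    ∀ z w : ℂ, -1 ≤ z.im → z.im ≤ 0 → -1 ≤ w.im → w.im ≤ 0 → f z = f w := by
  intro z w hz1 hz2 hw1 hw2
  obtain ⟨C, hC⟩ := hbdd
  -- periodic extension of f to the whole plane
  set g : ℂ → ℂ := fun w => f (↑w.re + (↑(Int.fract w.im) - 1) * I) with hgdef
  have hstar : ∀ (n : ℤ) (v : ℂ), (n : ℝ) - 1 ≤ v.im → v.im ≤ (n : ℝ) →
      g v = f (v - n * I) := by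
    intro n v h1 h2
    rcases lt_or_eq_of_le h2 with h2 | h2
    · have hfl : ⌊v.im⌋ = n - 1 := by
        rw [Int.floor_eq_iff]
        constructor <;> push_cast <;> linarith
      have hfr : Int.fract v.im = v.im - ((n : ℝ) - 1) := by
        rw [Int.fract, hfl]; push_cast; ring
      simp only [hgdef]
      congr 1
      apply Complex.ext <;> simp [hfr] <;> ring
    · have hfr : Int.fract v.im = 0 := by rw [h2, Int.fract_intCast]
      have harg : (↑v.re + (↑(Int.fract v.im) - 1) * I : ℂ) = ↑v.re - I := by
        rw [hfr]; push_cast; ring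
      have hv' : v - n * I = (v.re : ℂ) := by
        apply Complex.ext <;> simp [← h2]
      simp only [hgdef]
      rw [harg, hv']
      exact (hper v.re).symm
  -- continuity of g
  have hgA : ∀ n : ℤ, ContinuousOn g {v : ℂ | (n : ℝ) - 1 ≤ v.im ∧ v.im ≤ (n : ℝ)} := by
    intro n
    have hT : ContinuousOn (fun v : ℂ => f (v - n * I))
        {v : ℂ | (n : ℝ) - 1 ≤ v.im ∧ v.im ≤ (n : ℝ)} := by
      apply hcont.comp (Continuous.continuousOn (by continuity))
      intro v hv
      simp only [Set.mem_setOf_eq] at *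
      constructor <;> simp <;> [linarith [hv.1]; linarith [hv.2]]
    exact hT.congr (fun v hv => hstar n v hv.1 hv.2)
  have hgc : Continuous g := by
    rw [continuous_iff_continuousAt]
    intro z0
    set n : ℤ := ⌊z0.im⌋ + 1 with hn
    have hz01 : (n : ℝ) - 1 ≤ z0.im := by
      rw [hn]; push_cast; linarith [Int.floor_le z0.im]
    have hz02 : z0.im < (n : ℝ) := by
      rw [hn]; push_cast; linarith [Int.lt_floor_add_one z0.im]
    have cwA : ContinuousWithinAt g {v : ℂ | (n : ℝ) - 1 ≤ v.im ∧ v.im ≤ (n : ℝ)} z0 :=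
      (hgA n).continuousWithinAt ⟨hz01, le_of_lt hz02⟩
    have hBclosed : IsClosed {v : ℂ | ((n : ℤ) - 1 : ℤ) - 1 ≤ v.im ∧ v.im ≤ (((n : ℤ) - 1 : ℤ) : ℝ)} := by
      exact (isClosed_le continuous_const Complex.continuous_im).inter
        (isClosed_le Complex.continuous_im continuous_const)
    have cwB : ContinuousWithinAt g
        {v : ℂ | (((n : ℤ) - 1 : ℤ) : ℝ) - 1 ≤ v.im ∧ v.im ≤ (((n : ℤ) - 1 : ℤ) : ℝ)} z0 := by
      by_cases hzB : z0 ∈ {v : ℂ | (((n : ℤ) - 1 : ℤ) : ℝ) - 1 ≤ v.im ∧ v.im ≤ (((n : ℤ) - 1 : ℤ) : ℝ)}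
      · exact (hgA (n - 1)).continuousWithinAt hzB
      · refine continuousWithinAt_of_notMem_closure ?_
        rwa [IsClosed.closure_eq]
        exact (isClosed_le continuous_const Complex.continuous_im).inter
          (isClosed_le Complex.continuous_im continuous_const)
    have hnhds : {v : ℂ | (((n : ℤ) - 1 : ℤ) : ℝ) - 1 ≤ v.im ∧ v.im ≤ (((n : ℤ) - 1 : ℤ) : ℝ)} ∪
        {v : ℂ | (n : ℝ) - 1 ≤ v.im ∧ v.im ≤ (n : ℝ)} ∈ nhds z0 := by
      have hsub : {v : ℂ | (n : ℝ) - 2 < v.im ∧ v.im < (n : ℝ)} ⊆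
          {v : ℂ | (((n : ℤ) - 1 : ℤ) : ℝ) - 1 ≤ v.im ∧ v.im ≤ (((n : ℤ) - 1 : ℤ) : ℝ)} ∪
          {v : ℂ | (n : ℝ) - 1 ≤ v.im ∧ v.im ≤ (n : ℝ)} := by
        intro v hv
        simp only [Set.mem_setOf_eq, Set.mem_union] at *
        rcases le_total v.im ((n : ℝ) - 1) with h | h
        · left; push_cast; constructor <;> linarith [hv.1]
        · right; exact ⟨h, le_of_lt hv.2⟩
      refine Filter.mem_of_superset (IsOpen.mem_nhds ?_ ?_) hsub
      · exact (isOpen_lt continuous_const Complex.continuous_im).inter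
          (isOpen_lt Complex.continuous_im continuous_const)
      · exact ⟨by linarith, hz02⟩
    exact (cwB.union cwA).continuousAt hnhds
  -- differentiability of g away from the integer lines
  have hgdnon : ∀ z0 : ℂ, (∀ m : ℤ, z0.im ≠ (m : ℝ)) → DifferentiableAt ℂ g z0 := by
    intro z0 hm
    set n : ℤ := ⌊z0.im⌋ + 1 with hn
    have h1 : (n : ℝ) - 1 < z0.im := by
      have hle : ((⌊z0.im⌋ : ℤ) : ℝ) ≤ z0.im := Int.floor_le z0.im
      have hne : z0.im ≠ ((⌊z0.im⌋ : ℤ) : ℝ) := hm _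
      rw [hn]; push_cast
      cases lt_or_eq_of_le hle with
      | inl h => linarith
      | inr h => exact absurd h.symm hne
    have h2 : z0.im < (n : ℝ) := by
      rw [hn]; push_cast; linarith [Int.lt_floor_add_one z0.im]
    have hU : IsOpen {v : ℂ | (n : ℝ) - 1 < v.im ∧ v.im < (n : ℝ)} :=
      (isOpen_lt continuous_const Complex.continuous_im).inter
        (isOpen_lt Complex.continuous_im continuous_const)
    have hEq : g =ᶠ[nhds z0] (fun v => f (v - n * I)) := by
      filter_upwards [hU.mem_nhds ⟨h1, h2⟩] with v hv
      exact hstar n v (le_of_lt hv.1) (le_of_lt hv.2)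
    have hd : DifferentiableAt ℂ (fun v : ℂ => f (v - n * I)) z0 := by
      have hzim : (z0 - n * I).im = z0.im - n := by simp
      have hdf : DifferentiableAt ℂ f (z0 - n * I) := by
        apply hdiff <;> rw [hzim] <;> linarith
      exact hdf.comp z0 ((differentiable_id.sub_const ((n : ℂ) * I)) z0)
    exact hEq.differentiableAt_iff.2 hd
  have hgd : Differentiable ℂ g := by
    intro z0
    by_cases hint : ∃ m : ℤ, z0.im = (m : ℝ)
    · obtain ⟨m, hmeq⟩ := hint
      refine strip_diffAt_of_diff_off_line hgc (b := (m : ℝ)) ?_ hmeq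
      intro v hv1 hv2 hv3
      apply hgdnon
      intro k hk
      have hkm : k = m := by
        rw [hk] at hv1 hv2
        have c1 : (m : ℤ) - 1 < k := by exact_mod_cast (by push_cast; linarith : ((m : ℝ) - 1 : ℝ) < (k : ℝ))
        have c2 : k < m + 1 := by exact_mod_cast (by push_cast; linarith : ((k : ℝ)) < (m : ℝ) + 1)
        omega
      rw [hk, hkm] at hv3
      exact hv3 rfl
    · exact hgdnon z0 (fun m h => hint ⟨m, h⟩)
  -- boundedness of g
  have hgb : ∀ z0 : ℂ, ‖g z0‖ ≤ C := by
    intro z0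
    apply hC
    · simp only [Complex.add_im, Complex.ofReal_im, Complex.mul_im, Complex.sub_re,
        Complex.ofReal_re, Complex.I_im, Complex.sub_im, Complex.one_im, Complex.I_re,
        Complex.one_re]
      have := Int.fract_nonneg z0.im
      ring_nf
      linarith
    · simp only [Complex.add_im, Complex.ofReal_im, Complex.mul_im, Complex.sub_re,
        Complex.ofReal_re, Complex.I_im, Complex.sub_im, Complex.one_im, Complex.I_re,
        Complex.one_re]
      have := Int.fract_lt_one z0.im
      ring_nf
      linarith
  -- Liouville
  have hgconst : g z = g w := by
    apply hgd.apply_eq_apply_of_bounded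
    rw [isBounded_iff_forall_norm_le]
    exact ⟨C, by rintro x ⟨z0, rfl⟩; exact hgb z0⟩
  have h0z : g z = f z := by
    have h := hstar 0 z (by push_cast; linarith) (by push_cast; linarith)
    simpa using h
  have h0w : g w = f w := by
    have h := hstar 0 w (by push_cast; linarith) (by push_cast; linarith)
    simpa using h
  rw [← h0z, ← h0w, hgconst]
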